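/- The Λ-algebra homomorphism Φ : P_ρ → T determined on generators by z₀₀ ↦ z₀₀, z₀₁ ↦ z₀₁, z₁₀ ↦ z₁₀, z₁₁ ↦ z₁₁, c₁ ↦ z₁₀z₁₁x₁, d₁ ↦ z₀₀z₀₁x₁, c₂ ↦ z₀₁z₁₁x₂, d₂ ↦ z₀₀z₁₀x₂, c₁₂ ↦ z₀₁z₁₀(x₁ + x₂), d₁₂ ↦ z₀₀z₁₁(x₁ + x₂) is well defined (it sends each of the eight defining relations of P_ρ to zero) and is an isomorphism of Λ-algebras. -/

import Mathlib

set_option synthInstance.maxHeartbeats 1000000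
set_option maxHeartbeats 2000000

noncomputable section

open MvPolynomial

namespace BT2Rho

/-- `Λ = ℤ[ι, ι⁻¹]`, Laurent polynomials in the variable `ι`. -/
abbrev Lam : Type := LaurentPolynomial ℤ

/-- `ι ∈ Λ`. -/
def iota : Lam := LaurentPolynomial.T 1

/-- The defining ideal of `P_ρ`, the base change along `ρ : ℍ → ℤ[ι^{±1}]` of the
presentation of the equivariant cohomology of `BT²`.  The ten variables
`X 0, …, X 9` correspond to
`ζ₀₀, ζ₀₁, ζ₁₀, ζ₁₁, c_{ω₁}, c_{χω₁}, c_{ω₂}, c_{χω₂}, c_{ω₁⊗ω₂}, c_{χω₁⊗ω₂}`,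
i.e. to `z₀₀, z₀₁, z₁₀, z₁₁, c₁, d₁, c₂, d₂, c₁₂, d₁₂`. -/
def Irho : Ideal (MvPolynomial (Fin 10) Lam) :=
  Ideal.span
    { X 0 * X 1 * X 2 * X 3 - C (LaurentPolynomial.T 2),
      X 2 * X 3 * X 5 - X 0 * X 1 * X 4,
      X 1 * X 3 * X 7 - X 0 * X 2 * X 6,
      X 0 * X 8 - X 2 * X 5 - X 1 * X 7,
      X 3 * X 8 - X 1 * X 4 - X 2 * X 6,
      X 1 * X 9 - X 3 * X 5 - X 0 * X 6,
      X 2 * X 9 - X 0 * X 4 - X 3 * X 7,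
      X 8 * X 9 - X 4 * X 5 - X 6 * X 7
        - C (2 * LaurentPolynomial.T (-2)) * (X 0 ^ 2 * X 1 * X 2 * X 4 * X 6) }

/-- `P_ρ`. -/
abbrev Prho : Type := MvPolynomial (Fin 10) Lam ⧸ Irho

/-- Quotient map onto `P_ρ`. -/
def mkP : MvPolynomial (Fin 10) Lam →+* Prho := Ideal.Quotient.mk Irho

/-- The ring `ℤ[ι^{±1}, z₀₀^{±1}, z₀₁^{±1}, z₁₀^{±1}, z₁₁^{±1}]` of Laurent
polynomials in five variables: index `0` is `ι`, indices `1, 2, 3, 4` are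
`z₀₀, z₀₁, z₁₀, z₁₁`. -/
abbrev Base : Type := AddMonoidAlgebra ℤ (Fin 5 →₀ ℤ)

/-- The invertible generators of `Base`. -/
def uu (i : Fin 5) : Base := AddMonoidAlgebra.single (Finsupp.single i 1) 1

/-- The defining ideal of `T`, generated by `z₀₀z₀₁z₁₀z₁₁ − ι²`. -/
def IT : Ideal (MvPolynomial (Fin 2) Base) :=
  Ideal.span { (C (uu 1 * uu 2 * uu 3 * uu 4 - uu 0 ^ 2) : MvPolynomial (Fin 2) Base) }

/-- `T = ℤ[ι^{±1}, z₀₀^{±1}, z₀₁^{±1}, z₁₀^{±1}, z₁₁^{±1}][x₁, x₂] / (z₀₀z₀₁z₁₀z₁₁ − ι²)`,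
the nonequivariant integral cohomology of `BT²` regraded on `RO(ΠBT²)`.
The polynomial variables `X 0, X 1` are `x₁, x₂`. -/
abbrev Tring : Type := MvPolynomial (Fin 2) Base ⧸ IT

/-- Quotient map onto `T`. -/
def mkT : MvPolynomial (Fin 2) Base →+* Tring := Ideal.Quotient.mk IT

section Helpers
variable {R : Type*} [CommRing R]

def lHom (u : Rˣ) : Lam →+* R :=
  ((AddMonoidAlgebra.lift ℤ R ℤ) ((Units.coeHom R).comp (zpowersHom Rˣ u))).toRingHom

lemma lHom_T (u : Rˣ) (n : ℤ) : lHom u (LaurentPolynomial.T n) = ↑(u ^ n) := by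
  rw [lHom, LaurentPolynomial.T]
  erw [AddMonoidAlgebra.lift_single]
  simp [zpowersHom_apply]

lemma lHom_T1 (u : Rˣ) : lHom u (LaurentPolynomial.T 1) = (u : R) := by
  rw [lHom_T, zpow_one]

lemma lHom_T2 (u : Rˣ) : lHom u (LaurentPolynomial.T 2) = (u : R) * u := by
  rw [lHom_T, show (2:ℤ) = 1 + 1 from rfl, zpow_add, zpow_one, Units.val_mul]

lemma lHom_Tm2_mul (u : Rˣ) : lHom u (LaurentPolynomial.T (-2)) * ((u : R) * u) = 1 := by
  rw [← lHom_T2, ← map_mul, ← LaurentPolynomial.T_add]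
  norm_num [LaurentPolynomial.T_zero]

def fsHom (u : Fin 5 → Rˣ) : Multiplicative (Fin 5 →₀ ℤ) →* Rˣ where
  toFun f := (Multiplicative.toAdd f).prod fun i n => u i ^ n
  map_one' := by simp
  map_mul' f g := Finsupp.prod_add_index' (fun i => zpow_zero _) (fun i a b => zpow_add _ _ _)

def bHom (u : Fin 5 → Rˣ) : Base →+* R :=
  ((AddMonoidAlgebra.lift ℤ R (Fin 5 →₀ ℤ)) ((Units.coeHom R).comp (fsHom u))).toRingHom

lemma bHom_uu (u : Fin 5 → Rˣ) (i : Fin 5) : bHom u (uu i) = ↑(u i) := by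
  simp only [bHom, uu, AlgHom.toRingHom_eq_coe, RingHom.coe_coe,
    AddMonoidAlgebra.lift_single, one_smul, MonoidHom.coe_comp, Function.comp_apply,
    Units.coeHom_apply, fsHom, MonoidHom.coe_mk, OneHom.coe_mk, toAdd_ofAdd]
  show (((Finsupp.single i (1:ℤ)).prod fun i n => u i ^ n : Rˣ) : R) = u i
  rw [Finsupp.prod_single_index]
  · simp
  · exact zpow_zero _

lemma single_zero_eq (G : Type*) [AddCommMonoid G] (b : ℤ) :
    (AddMonoidAlgebra.single (0 : G) b : AddMonoidAlgebra ℤ G) = b • 1 := by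
  rw [AddMonoidAlgebra.one_def]
  erw [AddMonoidAlgebra.smul_single', mul_one]

lemma lamHom_ext {f g : Lam →+* R}
    (h : f (LaurentPolynomial.T 1) = g (LaurentPolynomial.T 1)) : f = g := by
  apply AddMonoidAlgebra.ringHom_ext
  · intro b
    rw [single_zero_eq, map_zsmul, map_zsmul, map_one, map_one]
  · intro a
    set F := (f : Lam →* R).comp (AddMonoidAlgebra.of ℤ ℤ) with hF
    set G := (g : Lam →* R).comp (AddMonoidAlgebra.of ℤ ℤ) with hG
    have key : F.toHomUnits = G.toHomUnits := by
      apply MonoidHom.ext_mint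
      apply Units.ext
      rw [MonoidHom.coe_toHomUnits, MonoidHom.coe_toHomUnits]
      exact h
    have : F (Multiplicative.ofAdd a) = G (Multiplicative.ofAdd a) := by
      rw [← MonoidHom.coe_toHomUnits F, ← MonoidHom.coe_toHomUnits G, key]
    exact this

lemma bHom_ext {f g : Base →+* R} (h : ∀ i, f (uu i) = g (uu i)) : f = g := by
  apply AddMonoidAlgebra.ringHom_ext
  · intro b
    rw [single_zero_eq, map_zsmul, map_zsmul, map_one, map_one]
  · intro a
    set F := (f : Base →* R).comp (AddMonoidAlgebra.of ℤ (Fin 5 →₀ ℤ)) with hF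
    set G := (g : Base →* R).comp (AddMonoidAlgebra.of ℤ (Fin 5 →₀ ℤ)) with hG
    have key : F.toHomUnits = G.toHomUnits := by
      apply AddMonoidHom.toMultiplicativeLeft.symm.injective
      apply Finsupp.addHom_ext'
      intro i
      apply AddMonoidHom.ext_int
      apply Additive.toMul.injective
      apply Units.ext
      show (F.toHomUnits (Multiplicative.ofAdd (Finsupp.single i 1)) : R)
        = G.toHomUnits (Multiplicative.ofAdd (Finsupp.single i 1))
      rw [MonoidHom.coe_toHomUnits, MonoidHom.coe_toHomUnits]
      exact h i
    have : F (Multiplicative.ofAdd a) = G (Multiplicative.ofAdd a) := by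
      rw [← MonoidHom.coe_toHomUnits F, ← MonoidHom.coe_toHomUnits G, key]
    exact this

end Helpers

/-! ### Units -/

def uuUnit (i : Fin 5) : Baseˣ where
  val := uu i
  inv := AddMonoidAlgebra.single (Finsupp.single i (-1)) 1
  val_inv := by
    rw [uu]
    erw [AddMonoidAlgebra.single_mul_single]
    simp [AddMonoidAlgebra.one_def]
  inv_val := by
    rw [uu]
    erw [AddMonoidAlgebra.single_mul_single]
    simp [AddMonoidAlgebra.one_def]

def tUnit (i : Fin 5) : Tringˣ := Units.map (mkT.comp (C : Base →+* _)).toMonoidHom (uuUnit i)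

lemma tUnit_val (i : Fin 5) : (tUnit i : Tring) = mkT (C (uu i)) := by
  simp [tUnit, uuUnit, mkT]

/-! ### The map Φ -/

def tz (i : Fin 5) : Tring := mkT (C (uu i))
def ty (j : Fin 2) : Tring := mkT (X j)

def gT : Fin 10 → Tring := fun i =>
  match i with
  | 0 => tz 1
  | 1 => tz 2
  | 2 => tz 3
  | 3 => tz 4
  | 4 => tz 3 * tz 4 * ty 0
  | 5 => tz 1 * tz 2 * ty 0
  | 6 => tz 2 * tz 4 * ty 1
  | 7 => tz 1 * tz 3 * ty 1
  | 8 => tz 2 * tz 3 * (ty 0 + ty 1)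
  | 9 => tz 1 * tz 4 * (ty 0 + ty 1)

-- the relation in Tring
lemma hTT : tz 1 * tz 2 * tz 3 * tz 4 = tz 0 * tz 0 := by
  show mkT (C (uu 1)) * mkT (C (uu 2)) * mkT (C (uu 3)) * mkT (C (uu 4))
    = mkT (C (uu 0)) * mkT (C (uu 0))
  have h0 : mkT (C (uu 1 * uu 2 * uu 3 * uu 4 - uu 0 ^ 2)) = 0 := by
    apply Ideal.Quotient.eq_zero_iff_mem.2
    exact Ideal.subset_span rfl
  rw [map_sub, map_sub, sub_eq_zero] at h0
  calc mkT (C (uu 1)) * mkT (C (uu 2)) * mkT (C (uu 3)) * mkT (C (uu 4))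
      = mkT (C (uu 1 * uu 2 * uu 3 * uu 4)) := by rw [map_mul, map_mul, map_mul, map_mul, map_mul, map_mul]
    _ = mkT (C (uu 0 ^ 2)) := h0
    _ = mkT (C (uu 0)) * mkT (C (uu 0)) := by rw [pow_two, map_mul, map_mul]

def PhiHat : MvPolynomial (Fin 10) Lam →+* Tring := eval₂Hom (lHom (tUnit 0)) gT

lemma PhiHat_C (r : Lam) : PhiHat (C r) = lHom (tUnit 0) r := eval₂Hom_C _ _ _
lemma PhiHat_X (i : Fin 10) : PhiHat (X i) = gT i := eval₂Hom_X' _ _ _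

lemma tUnit0_val : ((tUnit 0 : Tringˣ) : Tring) = tz 0 := tUnit_val 0

lemma PhiHat_kill : Irho ≤ RingHom.ker PhiHat := by
  rw [Irho, Ideal.span_le]
  intro p hp
  simp only [Set.mem_insert_iff, Set.mem_singleton_iff] at hp
  have hm2 := lHom_Tm2_mul (R := Tring) (tUnit 0)
  rw [tUnit0_val] at hm2
  set s : Tring := lHom (tUnit 0) (LaurentPolynomial.T (-2)) with hsdef
  have h2 : lHom (tUnit 0) (LaurentPolynomial.T 2) = tz 0 * tz 0 := by
    rw [lHom_T2, tUnit0_val]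
  rcases hp with rfl|rfl|rfl|rfl|rfl|rfl|rfl|rfl <;>
    rw [SetLike.mem_coe, RingHom.mem_ker] <;>
    simp only [map_sub, map_mul, map_pow, map_ofNat, PhiHat_C, PhiHat_X, h2, ← hsdef] <;>
    simp only [gT]
  · linear_combination hTT
  · ring
  · ring
  · ring
  · ring
  · ring
  · ring
  · linear_combination (2 * ty 0 * ty 1 - 2 * s * ty 0 * ty 1 *
      (tz 1 * tz 2 * tz 3 * tz 4 + tz 0 * tz 0)) * hTT + (-2 * ty 0 * ty 1 * tz 0 * tz 0) * hm2

def Phi : Prho →+* Tring := Ideal.Quotient.lift Irho PhiHat fun a ha => PhiHat_kill ha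

lemma Phi_mk (p : MvPolynomial (Fin 10) Lam) : Phi (mkP p) = PhiHat p :=
  Ideal.Quotient.lift_mk _ _ _

/-! ### Relations in Prho -/

local notation "TT" => LaurentPolynomial.T

lemma genZero (p : MvPolynomial (Fin 10) Lam)
    (hp : p ∈ ({ X 0 * X 1 * X 2 * X 3 - C (LaurentPolynomial.T 2),
      X 2 * X 3 * X 5 - X 0 * X 1 * X 4,
      X 1 * X 3 * X 7 - X 0 * X 2 * X 6,
      X 0 * X 8 - X 2 * X 5 - X 1 * X 7,
      X 3 * X 8 - X 1 * X 4 - X 2 * X 6,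
      X 1 * X 9 - X 3 * X 5 - X 0 * X 6,
      X 2 * X 9 - X 0 * X 4 - X 3 * X 7,
      X 8 * X 9 - X 4 * X 5 - X 6 * X 7
        - C (2 * LaurentPolynomial.T (-2)) * (X 0 ^ 2 * X 1 * X 2 * X 4 * X 6) }
      : Set (MvPolynomial (Fin 10) Lam))) : mkP p = 0 :=
  Ideal.Quotient.eq_zero_iff_mem.2 (Ideal.subset_span hp)

lemma q1 : mkP (X 0) * mkP (X 1) * mkP (X 2) * mkP (X 3) - mkP (C (TT 2)) = 0 := by
  have := genZero _ (show _ ∈ _ from by left; rfl)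
  simpa only [map_sub, map_mul] using this

lemma q2 : mkP (X 2) * mkP (X 3) * mkP (X 5) - mkP (X 0) * mkP (X 1) * mkP (X 4) = 0 := by
  have := genZero _ (show _ ∈ _ from by right; left; rfl)
  simpa only [map_sub, map_mul] using this

lemma q3 : mkP (X 1) * mkP (X 3) * mkP (X 7) - mkP (X 0) * mkP (X 2) * mkP (X 6) = 0 := by
  have := genZero _ (show _ ∈ _ from by right; right; left; rfl)
  simpa only [map_sub, map_mul] using this

lemma q4 : mkP (X 0) * mkP (X 8) - mkP (X 2) * mkP (X 5) - mkP (X 1) * mkP (X 7) = 0 := by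
  have := genZero _ (show _ ∈ _ from by right; right; right; left; rfl)
  simpa only [map_sub, map_mul] using this

lemma q5 : mkP (X 3) * mkP (X 8) - mkP (X 1) * mkP (X 4) - mkP (X 2) * mkP (X 6) = 0 := by
  have := genZero _ (show _ ∈ _ from by right; right; right; right; left; rfl)
  simpa only [map_sub, map_mul] using this

lemma q6 : mkP (X 1) * mkP (X 9) - mkP (X 3) * mkP (X 5) - mkP (X 0) * mkP (X 6) = 0 := by
  have := genZero _ (show _ ∈ _ from by right; right; right; right; right; left; rfl)
  simpa only [map_sub, map_mul] using this

lemma q7 : mkP (X 2) * mkP (X 9) - mkP (X 0) * mkP (X 4) - mkP (X 3) * mkP (X 7) = 0 := by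
  have := genZero _ (show _ ∈ _ from by right; right; right; right; right; right; left; rfl)
  simpa only [map_sub, map_mul] using this

lemma heP : mkP (C (TT (-2))) * mkP (C (TT 2)) = 1 := by
  rw [← map_mul, ← map_mul, ← LaurentPolynomial.T_add]
  norm_num

lemma hK2 : mkP (C (TT 2)) = mkP (C (TT 1)) * mkP (C (TT 1)) := by
  rw [← map_mul, ← map_mul, ← LaurentPolynomial.T_add]
  norm_num

/-! ### Units in Prho -/

def pU : Fin 5 → Prhoˣ := fun i =>
  match i with
  | 0 => ⟨mkP (C (TT 1)), mkP (C (TT (-1))), by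
      rw [← map_mul, ← map_mul, ← LaurentPolynomial.T_add]; norm_num, by
      rw [← map_mul, ← map_mul, ← LaurentPolynomial.T_add]; norm_num⟩
  | 1 => ⟨mkP (X 0), mkP (C (TT (-2)) * (X 1 * X 2 * X 3)), by
      simp only [map_mul]; linear_combination mkP (C (TT (-2))) * q1 + heP, by
      simp only [map_mul]; linear_combination mkP (C (TT (-2))) * q1 + heP⟩
  | 2 => ⟨mkP (X 1), mkP (C (TT (-2)) * (X 0 * X 2 * X 3)), by
      simp only [map_mul]; linear_combination mkP (C (TT (-2))) * q1 + heP, by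
      simp only [map_mul]; linear_combination mkP (C (TT (-2))) * q1 + heP⟩
  | 3 => ⟨mkP (X 2), mkP (C (TT (-2)) * (X 0 * X 1 * X 3)), by
      simp only [map_mul]; linear_combination mkP (C (TT (-2))) * q1 + heP, by
      simp only [map_mul]; linear_combination mkP (C (TT (-2))) * q1 + heP⟩
  | 4 => ⟨mkP (X 3), mkP (C (TT (-2)) * (X 0 * X 1 * X 2)), by
      simp only [map_mul]; linear_combination mkP (C (TT (-2))) * q1 + heP, by
      simp only [map_mul]; linear_combination mkP (C (TT (-2))) * q1 + heP⟩

/-! ### The map Ψ -/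

def psiv : Fin 2 → Prho := fun j =>
  match j with
  | 0 => mkP (C (TT (-2)) * (X 2 * X 3 * X 5))
  | 1 => mkP (C (TT (-2)) * (X 1 * X 3 * X 7))

def PsiHat : MvPolynomial (Fin 2) Base →+* Prho := eval₂Hom (bHom pU) psiv

lemma PsiHat_C (b : Base) : PsiHat (C b) = bHom pU b := eval₂Hom_C _ _ _
lemma PsiHat_X (j : Fin 2) : PsiHat (X j) = psiv j := eval₂Hom_X' _ _ _

lemma PsiHat_kill : IT ≤ RingHom.ker PsiHat := by
  rw [IT, Ideal.span_le]
  intro p hp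
  simp only [Set.mem_singleton_iff] at hp
  subst hp
  rw [SetLike.mem_coe, RingHom.mem_ker, PsiHat_C, map_sub, map_mul, map_mul, map_mul, map_pow,
    bHom_uu, bHom_uu, bHom_uu, bHom_uu, bHom_uu]
  show mkP (X 0) * mkP (X 1) * mkP (X 2) * mkP (X 3) - (mkP (C (TT 1))) ^ 2 = 0
  linear_combination q1 + hK2

def Psi : Tring →+* Prho := Ideal.Quotient.lift IT PsiHat fun _ ha => PsiHat_kill ha

lemma Psi_mk (p : MvPolynomial (Fin 2) Base) : Psi (mkT p) = PsiHat p :=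
  Ideal.Quotient.lift_mk _ _ _

lemma Psi_tz (i : Fin 5) : Psi (tz i) = ((pU i : Prhoˣ) : Prho) := by
  rw [tz, Psi_mk, PsiHat_C, bHom_uu]

lemma Psi_ty (j : Fin 2) : Psi (ty j) = psiv j := by
  rw [ty, Psi_mk, PsiHat_X]

lemma pU_val0 : ((pU 0 : Prhoˣ) : Prho) = mkP (C (TT 1)) := rfl
lemma pU_val1 : ((pU 1 : Prhoˣ) : Prho) = mkP (X 0) := rfl
lemma pU_val2 : ((pU 2 : Prhoˣ) : Prho) = mkP (X 1) := rfl
lemma pU_val3 : ((pU 3 : Prhoˣ) : Prho) = mkP (X 2) := rfl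
lemma pU_val4 : ((pU 4 : Prhoˣ) : Prho) = mkP (X 3) := rfl

lemma hm2T : lHom (tUnit 0) (TT (-2)) * (tz 0 * tz 0) = 1 := by
  have := lHom_Tm2_mul (R := Tring) (tUnit 0)
  rwa [tUnit0_val] at this

/-! ### Ψ ∘ Φ = id -/

lemma PsiPhi : Psi.comp Phi = RingHom.id Prho := by
  apply Ideal.Quotient.ringHom_ext
  apply MvPolynomial.ringHom_ext
  · intro r
    have key : (((Psi.comp Phi).comp mkP).comp (C : Lam →+* MvPolynomial (Fin 10) Lam))
        = ((RingHom.id Prho).comp mkP).comp (C : Lam →+* MvPolynomial (Fin 10) Lam) := by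
      apply lamHom_ext (R := Prho)
      show Psi (Phi (mkP (C (TT 1)))) = mkP (C (TT 1))
      rw [Phi_mk, PhiHat_C, lHom_T1, tUnit0_val, Psi_tz, pU_val0]
    exact RingHom.congr_fun key r
  · intro i
    show Psi (Phi (mkP (X i))) = mkP (X i)
    rw [Phi_mk, PhiHat_X]
    fin_cases i <;>
      simp only [gT, map_mul, map_add, Psi_tz, Psi_ty, psiv, pU_val1, pU_val2, pU_val3, pU_val4,
        map_mul]
    · rfl
    · rfl
    · rfl
    · rfl
    · show _ = mkP (X 4)
      linear_combination mkP (C (TT (-2))) * mkP (X 2) * mkP (X 3) * q2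
        + mkP (C (TT (-2))) * mkP (X 4) * q1 + mkP (X 4) * heP
    · show _ = mkP (X 5)
      linear_combination mkP (C (TT (-2))) * mkP (X 5) * q1 + mkP (X 5) * heP
    · show _ = mkP (X 6)
      linear_combination mkP (C (TT (-2))) * mkP (X 1) * mkP (X 3) * q3
        + mkP (C (TT (-2))) * mkP (X 6) * q1 + mkP (X 6) * heP
    · show _ = mkP (X 7)
      linear_combination mkP (C (TT (-2))) * mkP (X 7) * q1 + mkP (X 7) * heP
    · show _ = mkP (X 8)
      linear_combination (- (mkP (C (TT (-2))) * mkP (X 1) * mkP (X 2) * mkP (X 3))) * q4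
        + mkP (C (TT (-2))) * mkP (X 8) * q1 + mkP (X 8) * heP
    · show _ = mkP (X 9)
      linear_combination mkP (C (TT (-2))) * mkP (X 0) * mkP (X 3) * q3
        - mkP (C (TT (-2))) * mkP (X 0) * mkP (X 2) * mkP (X 3) * q6
        + mkP (C (TT (-2))) * mkP (X 9) * q1 + mkP (X 9) * heP

/-! ### Φ ∘ Ψ = id -/

lemma PhiPsi : Phi.comp Psi = RingHom.id Tring := by
  apply Ideal.Quotient.ringHom_ext
  apply MvPolynomial.ringHom_ext
  · intro b
    have key : (((Phi.comp Psi).comp mkT).comp (C : Base →+* MvPolynomial (Fin 2) Base))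
        = ((RingHom.id Tring).comp mkT).comp (C : Base →+* MvPolynomial (Fin 2) Base) := by
      apply bHom_ext (R := Tring)
      intro i
      show Phi (Psi (mkT (C (uu i)))) = mkT (C (uu i))
      rw [Psi_mk, PsiHat_C, bHom_uu]
      fin_cases i
      · show Phi ((pU 0 : Prhoˣ) : Prho) = mkT (C (uu 0))
        rw [pU_val0, Phi_mk, PhiHat_C, lHom_T1, tUnit0_val]; rfl
      · show Phi ((pU 1 : Prhoˣ) : Prho) = mkT (C (uu 1))
        rw [pU_val1, Phi_mk, PhiHat_X]; rfl
      · show Phi ((pU 2 : Prhoˣ) : Prho) = mkT (C (uu 2))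
        rw [pU_val2, Phi_mk, PhiHat_X]; rfl
      · show Phi ((pU 3 : Prhoˣ) : Prho) = mkT (C (uu 3))
        rw [pU_val3, Phi_mk, PhiHat_X]; rfl
      · show Phi ((pU 4 : Prhoˣ) : Prho) = mkT (C (uu 4))
        rw [pU_val4, Phi_mk, PhiHat_X]; rfl
    exact RingHom.congr_fun key b
  · intro j
    show Phi (Psi (mkT (X j))) = mkT (X j)
    rw [Psi_mk, PsiHat_X]
    fin_cases j <;>
      simp only [psiv] <;>
      rw [Phi_mk] <;>
      simp only [map_mul, PhiHat_C, PhiHat_X, gT]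
    · show _ = ty 0
      linear_combination lHom (tUnit 0) (TT (-2)) * ty 0 * hTT + ty 0 * hm2T
    · show _ = ty 1
      linear_combination lHom (tUnit 0) (TT (-2)) * ty 1 * hTT + ty 1 * hm2T


/-- The `Λ`-algebra homomorphism `Φ : P_ρ → T` determined on generators by
`ι ↦ ι`, `z_{ij} ↦ z_{ij}`, `c₁ ↦ z₁₀z₁₁x₁`, `d₁ ↦ z₀₀z₀₁x₁`, `c₂ ↦ z₀₁z₁₁x₂`,
`d₂ ↦ z₀₀z₁₀x₂`, `c₁₂ ↦ z₀₁z₁₀(x₁ + x₂)`, `d₁₂ ↦ z₀₀z₁₁(x₁ + x₂)` is well defined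
(it kills the eight defining relations of `P_ρ`) and is an isomorphism of
`Λ`-algebras. -/
theorem rho_iso :
    ∃ Φ : Prho →+* Tring,
      Φ (mkP (C iota)) = mkT (C (uu 0)) ∧
      Φ (mkP (X 0)) = mkT (C (uu 1)) ∧
      Φ (mkP (X 1)) = mkT (C (uu 2)) ∧
      Φ (mkP (X 2)) = mkT (C (uu 3)) ∧
      Φ (mkP (X 3)) = mkT (C (uu 4)) ∧
      Φ (mkP (X 4)) = mkT (C (uu 3) * C (uu 4) * X 0) ∧
      Φ (mkP (X 5)) = mkT (C (uu 1) * C (uu 2) * X 0) ∧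
      Φ (mkP (X 6)) = mkT (C (uu 2) * C (uu 4) * X 1) ∧
      Φ (mkP (X 7)) = mkT (C (uu 1) * C (uu 3) * X 1) ∧
      Φ (mkP (X 8)) = mkT (C (uu 2) * C (uu 3) * (X 0 + X 1)) ∧
      Φ (mkP (X 9)) = mkT (C (uu 1) * C (uu 4) * (X 0 + X 1)) ∧
      Function.Bijective Φ := by
  refine ⟨Phi, ?_, ?_, ?_, ?_, ?_, ?_, ?_, ?_, ?_, ?_, ?_, ?_⟩
  · rw [Phi_mk, PhiHat_C, iota, lHom_T1, tUnit0_val]; rfl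
  · rw [Phi_mk, PhiHat_X]; rfl
  · rw [Phi_mk, PhiHat_X]; rfl
  · rw [Phi_mk, PhiHat_X]; rfl
  · rw [Phi_mk, PhiHat_X]; rfl
  · rw [Phi_mk, PhiHat_X]; show gT 4 = _; simp only [gT, tz, ty, map_mul]
  · rw [Phi_mk, PhiHat_X]; show gT 5 = _; simp only [gT, tz, ty, map_mul]
  · rw [Phi_mk, PhiHat_X]; show gT 6 = _; simp only [gT, tz, ty, map_mul]
  · rw [Phi_mk, PhiHat_X]; show gT 7 = _; simp only [gT, tz, ty, map_mul]
  · rw [Phi_mk, PhiHat_X]; show gT 8 = _; simp only [gT, tz, ty, map_mul, map_add]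
  · rw [Phi_mk, PhiHat_X]; show gT 9 = _; simp only [gT, tz, ty, map_mul, map_add]
  · exact Function.bijective_iff_has_inverse.mpr
      ⟨Psi, fun x => by simpa using RingHom.congr_fun PsiPhi x,
        fun y => by simpa using RingHom.congr_fun PhiPsi y⟩


end BT2Rho

end
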